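/- (Renewal probabilities are dominated by reach probabilities, combinatorial form) Fix sequences λ with λ_i ≥ 0 and ρ with ρ_i ≥ 0. Then for every integer k ≥ 2, C_k ≤ Σ_{ℓ=2}^{k} q_ℓ^{(k)}, where C_k is the weighted Catalan number. -/

import Mathlib

open Filter Finset

/-- Final height of a `±1` path started at height `j`; `true` is a rise step,
`false` is a fall step. -/
def endH : ℕ → List Bool → ℕ
  | j, [] => j
  | j, true :: s => endH (j + 1) s
  | j, false :: s => endH (j - 1) s

/-- `isDyck j s` holds when the path `s` started at height `j` never goes below height 0
(every fall step occurs from height ≥ 1). -/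
def isDyck : ℕ → List Bool → Bool
  | _, [] => true
  | j, true :: s => isDyck (j + 1) s
  | j, false :: s => decide (1 ≤ j) && isDyck (j - 1) s

/-- `isJump j s` holds when the path `s` started at height `j` stays at height ≥ 1
(every fall step occurs from height ≥ 2). -/
def isJump : ℕ → List Bool → Bool
  | _, [] => true
  | j, true :: s => isJump (j + 1) s
  | j, false :: s => decide (2 ≤ j) && isJump (j - 1) s

/-- Weight of a lattice path: a rise step from height `j` has weight `u j`, a fall step
from height `j+1` to `j` has weight `v j`. -/
noncomputable def dwt (u v : ℕ → ℝ) : ℕ → List Bool → ℝ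
  | _, [] => 1
  | j, true :: s => u j * dwt u v (j + 1) s
  | j, false :: s => v (j - 1) * dwt u v (j - 1) s

/-- Weight `p(γ)` of a jump-chain path: an up-step from height `j` has weight
`λ_j/(1+λ_j+D_j)`, a down-step from height `j` has weight `1/(1+λ_j+D_j)`. -/
noncomputable def jwt (lam Dd : ℕ → ℝ) : ℕ → List Bool → ℝ
  | _, [] => 1
  | j, true :: s => lam j / (1 + lam j + Dd j) * jwt lam Dd (j + 1) s
  | j, false :: s => 1 / (1 + lam j + Dd j) * jwt lam Dd (j - 1) s

/-- `D_j = Σ_{i=1}^j ρ_i`. -/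
noncomputable def Dd (rho : ℕ → ℝ) (j : ℕ) : ℝ := ∑ i ∈ Finset.Icc 1 j, rho i

/-- `u(j) = λ_{j+1}/(1+λ_{j+1}+D_{j+1})`. -/
noncomputable def uWt (lam rho : ℕ → ℝ) (j : ℕ) : ℝ :=
  lam (j + 1) / (1 + lam (j + 1) + Dd rho (j + 1))

/-- `v(j) = 1/(1+λ_{j+2}+D_{j+2})`. -/
noncomputable def vWt (lam rho : ℕ → ℝ) (j : ℕ) : ℝ :=
  1 / (1 + lam (j + 2) + Dd rho (j + 2))

/-- The weighted Catalan number `C_k`: the sum of `ω(γ)` over all Dyck paths `γ` of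
length `2k` (paths of `k` rise and `k` fall steps from height 0 staying at height ≥ 0). -/
noncomputable def Ck (lam rho : ℕ → ℝ) (k : ℕ) : ℝ :=
  ∑ γ : Fin (2 * k) → Bool,
    if isDyck 0 (List.ofFn γ) = true ∧ endH 0 (List.ofFn γ) = 0 then
      dwt (uWt lam rho) (vWt lam rho) 0 (List.ofFn γ)
    else 0

/-- The power series `Σ_k C_k z^k` as a formal multilinear series over `ℂ`. -/
noncomputable def gSeries (lam rho : ℕ → ℝ) : FormalMultilinearSeries ℂ ℂ ℂ :=
  fun n => FormalMultilinearSeries.ofScalars ℂ (fun k => (Ck lam rho k : ℂ)) n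

/-- `M`, the radius of convergence of `g(z) = Σ_k C_k z^k`. -/
noncomputable def radiusM (lam rho : ℕ → ℝ) : ENNReal := (gSeries lam rho).radius

/-- `σ(ℓ) = ∏_{n=1}^ℓ 1/(1+D_n)`. -/
noncomputable def sigmaWt (rho : ℕ → ℝ) (l : ℕ) : ℝ :=
  ∏ n ∈ Finset.Icc 1 l, 1 / (1 + Dd rho n)

/-- `q_ℓ^{(k)} = Σ_{γ ∈ Γ_ℓ^{(k)}} p(γ) σ(ℓ)`, where `Γ_ℓ^{(k)}` is the set of jump-chain
paths of length `2k − ℓ − 1` that start at height 1, stay at height ≥ 1, and whose final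
step is an up-step ending at height `ℓ`. -/
noncomputable def qsum (lam rho : ℕ → ℝ) (k l : ℕ) : ℝ :=
  (∑ γ : Fin (2 * k - l - 1) → Bool,
    if isJump 1 (List.ofFn γ) = true ∧ endH 1 (List.ofFn γ) = l ∧
        (List.ofFn γ).getLast? = some true then
      jwt lam (Dd rho) 1 (List.ofFn γ)
    else 0) * sigmaWt rho l

/-- `Γ_ℓ^{(k)}`, as a set of step lists. -/
def Gamma (k l : ℕ) : Set (List Bool) :=
  {s | s.length = 2 * k - l - 1 ∧ isJump 1 s = true ∧ endH 1 s = l ∧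
    s.getLast? = some true}

/-- The path modification `γ ↦ γ̃`: insert `ℓ − 2` consecutive down-steps immediately
before the final (upward) step. -/
def tilde (l : ℕ) (s : List Bool) : List Bool :=
  s.dropLast ++ List.replicate (l - 2) false ++ [true]



/-! ### Auxiliary development -/

section Aux

variable (lam rho : ℕ → ℝ)

/-- up-step weight of the jump chain at height `j`. -/
noncomputable def upw (j : ℕ) : ℝ := lam j / (1 + lam j + Dd rho j)

/-- down-step weight of the jump chain at height `j`. -/
noncomputable def dnw (j : ℕ) : ℝ := 1 / (1 + lam j + Dd rho j)

/-- `T j m`: total weight of jump paths from `j`, of length `m`, staying `≥ 1`,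
ending at height `1`. -/
noncomputable def T : ℕ → ℕ → ℝ
  | j, 0 => if j = 1 then 1 else 0
  | j, m + 1 =>
      upw lam rho j * T (j + 1) m +
        (if 2 ≤ j then dnw lam rho j * T (j - 1) m else 0)

/-- `U j m l`: total weight of jump paths from `j`, of length `m`, staying `≥ 1`,
ending at height `l`, with last step an up-step. -/
noncomputable def U : ℕ → ℕ → ℕ → ℝ
  | _, 0, _ => 0
  | j, 1, l => if l = j + 1 then upw lam rho j else 0
  | j, m + 2, l =>
      upw lam rho j * U (j + 1) (m + 1) l +
        (if 2 ≤ j then dnw lam rho j * U (j - 1) (m + 1) l else 0)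

variable {lam rho}

lemma Dd_nonneg (hrho : ∀ i, 1 ≤ i → 0 ≤ rho i) (j : ℕ) : 0 ≤ Dd rho j := by
  apply Finset.sum_nonneg
  intro i hi
  exact hrho i (Finset.mem_Icc.mp hi).1

lemma Dd_succ (j : ℕ) : Dd rho (j + 1) = Dd rho j + rho (j + 1) := by
  unfold Dd
  rw [Finset.sum_Icc_succ_top (by omega)]

lemma Dd_mono (hrho : ∀ i, 1 ≤ i → 0 ≤ rho i) {i j : ℕ} (h : i ≤ j) : Dd rho i ≤ Dd rho j := by
  unfold Dd
  apply Finset.sum_le_sum_of_subset_of_nonneg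
  · exact Finset.Icc_subset_Icc le_rfl h
  · intro n hn _
    exact hrho n (Finset.mem_Icc.mp hn).1

lemma den_pos (hlam : ∀ i, 1 ≤ i → 0 ≤ lam i) (hrho : ∀ i, 1 ≤ i → 0 ≤ rho i) {j : ℕ} (hj : 1 ≤ j) : 0 < 1 + lam j + Dd rho j := by
  have h1 := hlam j hj
  have h2 := Dd_nonneg hrho j
  linarith

lemma sden_pos (hrho : ∀ i, 1 ≤ i → 0 ≤ rho i) (j : ℕ) : 0 < 1 + Dd rho j := by
  have h2 := Dd_nonneg hrho j
  linarith

lemma upw_nonneg (hlam : ∀ i, 1 ≤ i → 0 ≤ lam i) (hrho : ∀ i, 1 ≤ i → 0 ≤ rho i) {j : ℕ} (hj : 1 ≤ j) : 0 ≤ upw lam rho j :=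
  div_nonneg (hlam j hj) (le_of_lt (den_pos hlam hrho hj))

lemma dnw_nonneg (hlam : ∀ i, 1 ≤ i → 0 ≤ lam i) (hrho : ∀ i, 1 ≤ i → 0 ≤ rho i) {j : ℕ} (hj : 1 ≤ j) : 0 ≤ dnw lam rho j :=
  div_nonneg zero_le_one (le_of_lt (den_pos hlam hrho hj))

lemma upw_le_one (hlam : ∀ i, 1 ≤ i → 0 ≤ lam i) (hrho : ∀ i, 1 ≤ i → 0 ≤ rho i) {j : ℕ} (hj : 1 ≤ j) : upw lam rho j ≤ 1 := by
  rw [upw, div_le_one (den_pos hlam hrho hj)]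
  have := Dd_nonneg hrho j
  linarith

lemma sigmaWt_nonneg (hrho : ∀ i, 1 ≤ i → 0 ≤ rho i) (l : ℕ) : 0 ≤ sigmaWt rho l := by
  apply Finset.prod_nonneg
  intro n _
  exact le_of_lt (div_pos one_pos (sden_pos hrho n))


/-! ### Dyck paths vs jump paths -/

lemma isDyck_eq_isJump : ∀ (s : List Bool) (j : ℕ), isDyck j s = isJump (j + 1) s := by
  intro s
  induction s with
  | nil => intro j; rfl
  | cons b t ih =>
    intro j
    cases b with
    | true => simpa [isDyck, isJump] using ih (j + 1)
    | false =>
      simp only [isDyck, isJump]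
      rcases Nat.eq_zero_or_pos j with hj | hj
      · subst hj; simp
      · have h1 : decide (1 ≤ j) = true := decide_eq_true (by omega)
        have h2 : decide (2 ≤ j + 1) = true := decide_eq_true (by omega)
        rw [h1, h2]
        have : j - 1 + 1 = j := by omega
        rw [Bool.true_and, Bool.true_and, ih (j - 1), this, Nat.add_sub_cancel]

lemma endH_succ : ∀ (s : List Bool) (j : ℕ), isDyck j s = true →
    endH (j + 1) s = endH j s + 1 := by
  intro s
  induction s with
  | nil => intro j _; rfl
  | cons b t ih =>
    intro j hd
    cases b with
    | true =>
      simp only [isDyck] at hd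
      simpa [endH] using ih (j + 1) hd
    | false =>
      simp only [isDyck, Bool.and_eq_true, decide_eq_true_eq] at hd
      obtain ⟨hj, hd⟩ := hd
      have h1 : j + 1 - 1 = j - 1 + 1 := by omega
      simp only [endH, h1]
      exact ih (j - 1) hd

lemma dwt_eq_jwt : ∀ (s : List Bool) (j : ℕ), isDyck j s = true →
    dwt (uWt lam rho) (vWt lam rho) j s = jwt lam (Dd rho) (j + 1) s := by
  intro s
  induction s with
  | nil => intro j _; rfl
  | cons b t ih =>
    intro j hd
    cases b with
    | true =>
      simp only [isDyck] at hd
      simp only [dwt, jwt, uWt]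
      rw [ih (j + 1) hd]
    | false =>
      simp only [isDyck, Bool.and_eq_true, decide_eq_true_eq] at hd
      obtain ⟨hj, hd⟩ := hd
      simp only [dwt, jwt, vWt]
      have h1 : j - 1 + 2 = j + 1 := by omega
      have h2 : j + 1 - 1 = j - 1 + 1 := by omega
      rw [h1, h2, ih (j - 1) hd]

/-! ### Sums over functions as recursions -/

lemma sum_ofFn_succ (F : List Bool → ℝ) (n : ℕ) :
    ∑ γ : Fin (n + 1) → Bool, F (List.ofFn γ) =
      ∑ b : Bool, ∑ γ : Fin n → Bool, F (b :: List.ofFn γ) := by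
  rw [← Fintype.sum_prod_type (f := fun p : Bool × (Fin n → Bool) => F (p.1 :: List.ofFn p.2))]
  apply Fintype.sum_equiv (Fin.consEquiv (fun _ => Bool)).symm
  intro γ
  rw [List.ofFn_succ]
  rfl

lemma getLast?_cons_ofFn {n : ℕ} (b : Bool) (γ : Fin (n + 1) → Bool) :
    (b :: List.ofFn γ).getLast? = (List.ofFn γ).getLast? := by
  rw [List.ofFn_succ]
  exact List.getLast?_cons_cons

lemma sumT : ∀ (m j : ℕ),
    (∑ γ : Fin m → Bool,
      if isJump j (List.ofFn γ) = true ∧ endH j (List.ofFn γ) = 1 then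
        jwt lam (Dd rho) j (List.ofFn γ)
      else 0) = T lam rho j m := by
  intro m
  induction m with
  | zero =>
    intro j
    rw [Fintype.sum_eq_single (fun i : Fin 0 => true) (by intro γ hγ; exact absurd (funext (fun i => i.elim0)) hγ)]
    simp only [List.ofFn_zero, isJump, endH, jwt, T]
    by_cases hj : j = 1 <;> simp [hj]
  | succ n ih =>
    intro j
    have hsplit : (∑ γ : Fin (n + 1) → Bool,
        if isJump j (List.ofFn γ) = true ∧ endH j (List.ofFn γ) = 1 then
          jwt lam (Dd rho) j (List.ofFn γ) else 0) =
        ∑ b : Bool, ∑ γ : Fin n → Bool,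
        if isJump j (b :: List.ofFn γ) = true ∧ endH j (b :: List.ofFn γ) = 1 then
          jwt lam (Dd rho) j (b :: List.ofFn γ) else 0 :=
      sum_ofFn_succ (fun s => if isJump j s = true ∧ endH j s = 1 then
        jwt lam (Dd rho) j s else 0) n
    rw [hsplit, Fintype.sum_bool, T]
    congr 1
    · rw [← ih (j + 1), Finset.mul_sum]
      apply Finset.sum_congr rfl
      intro γ _
      simp only [isJump, endH, jwt]
      by_cases h : isJump (j + 1) (List.ofFn γ) = true ∧ endH (j + 1) (List.ofFn γ) = 1
      · rw [if_pos h, upw]; exact if_pos h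
      · rw [if_neg h, mul_zero]; exact if_neg h
    · by_cases hj : 2 ≤ j
      · rw [if_pos hj, ← ih (j - 1), Finset.mul_sum]
        apply Finset.sum_congr rfl
        intro γ _
        have hd : decide (2 ≤ j) = true := by simpa using hj
        simp only [isJump, endH, jwt, hd, Bool.true_and]
        by_cases h : isJump (j - 1) (List.ofFn γ) = true ∧ endH (j - 1) (List.ofFn γ) = 1
        · rw [if_pos h, if_pos h, dnw]
        · rw [if_neg h, if_neg h, mul_zero]
      · rw [if_neg hj]
        apply Finset.sum_eq_zero
        intro γ _
        have hd : decide (2 ≤ j) = false := by simpa using hj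
        simp [isJump, hd]

lemma sumU : ∀ (m j l : ℕ),
    (∑ γ : Fin m → Bool,
      if isJump j (List.ofFn γ) = true ∧ endH j (List.ofFn γ) = l ∧
          (List.ofFn γ).getLast? = some true then
        jwt lam (Dd rho) j (List.ofFn γ)
      else 0) = U lam rho j m l := by
  intro m
  induction m with
  | zero =>
    intro j l
    rw [Fintype.sum_eq_single (fun i : Fin 0 => true) (by intro γ hγ; exact absurd (funext (fun i => i.elim0)) hγ)]
    simp [List.ofFn_zero, U]
  | succ n ih =>
    intro j l
    have hsplit : (∑ γ : Fin (n + 1) → Bool,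
        if isJump j (List.ofFn γ) = true ∧ endH j (List.ofFn γ) = l ∧
            (List.ofFn γ).getLast? = some true then
          jwt lam (Dd rho) j (List.ofFn γ) else 0) =
        ∑ b : Bool, ∑ γ : Fin n → Bool,
        if isJump j (b :: List.ofFn γ) = true ∧ endH j (b :: List.ofFn γ) = l ∧
            (b :: List.ofFn γ).getLast? = some true then
          jwt lam (Dd rho) j (b :: List.ofFn γ) else 0 :=
      sum_ofFn_succ (fun s => if isJump j s = true ∧ endH j s = l ∧
        s.getLast? = some true then jwt lam (Dd rho) j s else 0) n
    rw [hsplit, Fintype.sum_bool]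
    cases n with
    | zero =>
      rw [Fintype.sum_eq_single (fun i : Fin 0 => true) (by intro γ hγ; exact absurd (funext (fun i => i.elim0)) hγ)]
      rw [Fintype.sum_eq_single (fun i : Fin 0 => true) (by intro γ hγ; exact absurd (funext (fun i => i.elim0)) hγ)]
      simp only [List.ofFn_zero, isJump, endH, jwt, U]
      by_cases hl : l = j + 1
      · subst hl
        simp [upw]
      · rw [if_neg hl, if_neg (by simp [hl, eq_comm]), if_neg (by simp)]
        ring
    | succ n' =>
      show _ = U lam rho j (n' + 2) l
      rw [U]
      congr 1
      · rw [← ih (j + 1) l, Finset.mul_sum]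
        apply Finset.sum_congr rfl
        intro γ _
        rw [getLast?_cons_ofFn]
        simp only [isJump, endH, jwt]
        by_cases h : isJump (j + 1) (List.ofFn γ) = true ∧ endH (j + 1) (List.ofFn γ) = l ∧
            (List.ofFn γ).getLast? = some true
        · rw [if_pos h, upw]; exact if_pos h
        · rw [if_neg h, mul_zero]; exact if_neg h
      · by_cases hj : 2 ≤ j
        · rw [if_pos hj, ← ih (j - 1) l, Finset.mul_sum]
          apply Finset.sum_congr rfl
          intro γ _
          rw [getLast?_cons_ofFn]
          have hd : decide (2 ≤ j) = true := by simpa using hj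
          simp only [isJump, endH, jwt, hd, Bool.true_and]
          by_cases h : isJump (j - 1) (List.ofFn γ) = true ∧ endH (j - 1) (List.ofFn γ) = l ∧
              (List.ofFn γ).getLast? = some true
          · rw [if_pos h, if_pos h, dnw]
          · rw [if_neg h, if_neg h, mul_zero]
        · rw [if_neg hj]
          apply Finset.sum_eq_zero
          intro γ _
          have hd : decide (2 ≤ j) = false := by simpa using hj
          simp [isJump, hd]


/-! ### Basic properties of `T` and `U` -/

lemma Trec {n : ℕ} (hn : 1 ≤ n) (j : ℕ) :
    T lam rho j n = upw lam rho j * T lam rho (j + 1) (n - 1) +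
      (if 2 ≤ j then dnw lam rho j * T lam rho (j - 1) (n - 1) else 0) := by
  obtain ⟨n', rfl⟩ : ∃ n', n = n' + 1 := ⟨n - 1, by omega⟩
  rw [T]
  simp

lemma Urec {n : ℕ} (hn : 2 ≤ n) (j l : ℕ) :
    U lam rho j n l = upw lam rho j * U lam rho (j + 1) (n - 1) l +
      (if 2 ≤ j then dnw lam rho j * U lam rho (j - 1) (n - 1) l else 0) := by
  obtain ⟨n', rfl⟩ : ∃ n', n = n' + 2 := ⟨n - 2, by omega⟩
  rw [U]
  norm_num

lemma Tzero : ∀ (m j : ℕ), m + 1 < j → T lam rho j m = 0 := by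
  intro m
  induction m with
  | zero =>
    intro j hj
    rw [T, if_neg (by omega)]
  | succ n ih =>
    intro j hj
    rw [T, ih (j + 1) (by omega)]
    rcases le_or_gt 2 j with h2 | h2
    · rw [if_pos h2, ih (j - 1) (by omega), mul_zero, mul_zero, add_zero]
    · rw [if_neg (by omega), mul_zero, add_zero]

lemma Uzero_high : ∀ (m j l : ℕ), j + m < l → U lam rho j m l = 0 := by
  intro m
  induction m with
  | zero => intro j l _; rw [U]
  | succ n ih =>
    intro j l hl
    cases n with
    | zero => rw [U, if_neg (by omega)]
    | succ n' =>
      rw [U, ih (j + 1) l (by omega)]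
      rcases le_or_gt 2 j with h2 | h2
      · rw [if_pos h2, ih (j - 1) l (by omega), mul_zero, mul_zero, add_zero]
      · rw [if_neg (by omega), mul_zero, add_zero]

lemma Uzero_low : ∀ (m j l : ℕ), l + m ≤ j + 1 → U lam rho j m l = 0 := by
  intro m
  induction m with
  | zero => intro j l _; rw [U]
  | succ n ih =>
    intro j l hl
    cases n with
    | zero => rw [U, if_neg (by omega)]
    | succ n' =>
      rw [U, ih (j + 1) l (by omega)]
      rcases le_or_gt 2 j with h2 | h2
      · rw [if_pos h2, ih (j - 1) l (by omega), mul_zero, mul_zero, add_zero]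
      · rw [if_neg (by omega), mul_zero, add_zero]

lemma Tnonneg (hlam : ∀ i, 1 ≤ i → 0 ≤ lam i) (hrho : ∀ i, 1 ≤ i → 0 ≤ rho i) :
    ∀ (m j : ℕ), 1 ≤ j → 0 ≤ T lam rho j m := by
  intro m
  induction m with
  | zero =>
    intro j _
    rw [T]
    split <;> norm_num
  | succ n ih =>
    intro j hj
    rw [T]
    apply add_nonneg
    · exact mul_nonneg (upw_nonneg hlam hrho hj) (ih (j + 1) (by omega))
    · split
      · exact mul_nonneg (dnw_nonneg hlam hrho hj) (ih (j - 1) (by omega))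
      · exact le_rfl

lemma Unonneg (hlam : ∀ i, 1 ≤ i → 0 ≤ lam i) (hrho : ∀ i, 1 ≤ i → 0 ≤ rho i) :
    ∀ (m j l : ℕ), 1 ≤ j → 0 ≤ U lam rho j m l := by
  intro m
  induction m with
  | zero => intro j l _; rw [U]
  | succ n ih =>
    intro j l hj
    cases n with
    | zero =>
      rw [U]
      split
      · exact upw_nonneg hlam hrho hj
      · exact le_rfl
    | succ n' =>
      rw [U]
      apply add_nonneg
      · exact mul_nonneg (upw_nonneg hlam hrho hj) (ih (j + 1) l (by omega))
      · split
        · exact mul_nonneg (dnw_nonneg hlam hrho hj) (ih (j - 1) l (by omega))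
        · exact le_rfl

/-! ### The descent bound `T l (l+1) ≤ σ(l)` -/

lemma Tprod : ∀ (j : ℕ), 1 ≤ j →
    T lam rho (j + 1) j = ∏ n ∈ Finset.Icc 2 (j + 1), dnw lam rho n := by
  intro j
  induction j with
  | zero => omega
  | succ n ih =>
    intro _
    rw [Trec (by omega) (n + 1 + 1), if_pos (by omega)]
    simp only [Nat.add_sub_cancel]
    rw [Tzero n (n + 3) (by omega), mul_zero, zero_add]
    rcases Nat.eq_zero_or_pos n with hn | hn
    · subst hn
      have hT10 : T lam rho 1 0 = 1 := by rw [T]; simp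
      rw [hT10, mul_one]
      norm_num
    · rw [ih hn, Finset.prod_Icc_succ_top (a := 2) (b := n + 1) (by omega)]
      exact mul_comm _ _

lemma dnw_le_s (hlam : ∀ i, 1 ≤ i → 0 ≤ lam i) (hrho : ∀ i, 1 ≤ i → 0 ≤ rho i)
    (n : ℕ) (hn : 1 ≤ n) : dnw lam rho (n + 1) ≤ 1 / (1 + Dd rho n) := by
  rw [dnw]
  apply one_div_le_one_div_of_le (sden_pos hrho n)
  have h1 := hlam (n + 1) (by omega)
  have h2 := Dd_mono hrho (Nat.le_succ n)
  linarith

lemma prod_shift (f : ℕ → ℝ) (j : ℕ) :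
    ∏ n ∈ Finset.Icc 2 (j + 1), f n = ∏ n ∈ Finset.Icc 1 j, f (n + 1) := by
  rw [← Finset.image_add_right_Icc 1 j 1]
  rw [Finset.prod_image (by intro a _ b _ h; beta_reduce at h; omega)]

lemma Tprod_le (hlam : ∀ i, 1 ≤ i → 0 ≤ lam i) (hrho : ∀ i, 1 ≤ i → 0 ≤ rho i)
    (j : ℕ) (hj : 1 ≤ j) :
    ∏ n ∈ Finset.Icc 2 (j + 1), dnw lam rho n ≤ sigmaWt rho j := by
  rw [prod_shift, sigmaWt]
  apply Finset.prod_le_prod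
  · intro n hn
    exact dnw_nonneg hlam hrho (by omega)
  · intro n hn
    have hn1 : 1 ≤ n := (Finset.mem_Icc.mp hn).1
    exact dnw_le_s hlam hrho n hn1

lemma descent_le (hlam : ∀ i, 1 ≤ i → 0 ≤ lam i) (hrho : ∀ i, 1 ≤ i → 0 ≤ rho i) :
    ∀ (j : ℕ), 1 ≤ j → T lam rho j (j + 1) ≤ sigmaWt rho j := by
  intro j
  induction j with
  | zero => omega
  | succ n ih =>
    intro _
    rcases Nat.eq_zero_or_pos n with hn | hn
    · -- j = 1 : T 1 2 = upw 1 * T 2 1 = upw 1 * dnw 2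
      subst hn
      have hT10 : T lam rho 1 0 = 1 := by rw [T]; simp
      have hT12 : T lam rho (0 + 1) (0 + 1 + 1) = upw lam rho 1 * dnw lam rho 2 := by
        rw [Trec (by omega) (0 + 1), if_neg (by omega), add_zero]
        simp only [Nat.add_sub_cancel]
        rw [Trec (by omega) (1 + 1), if_pos (by omega)]
        simp only [Nat.add_sub_cancel]
        rw [Tzero 0 3 (by omega), hT10, mul_zero, zero_add, mul_one]
        norm_num
      rw [hT12]
      have h1 : upw lam rho 1 ≤ 1 := upw_le_one hlam hrho (by omega)
      have h2 : dnw lam rho 2 ≤ 1 / (1 + Dd rho 1) := dnw_le_s hlam hrho 1 (by omega)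
      have h3 : 0 ≤ dnw lam rho 2 := dnw_nonneg hlam hrho (by omega)
      have h4 : sigmaWt rho (0 + 1) = 1 / (1 + Dd rho 1) := by
        rw [sigmaWt]
        simp
      rw [h4]
      calc upw lam rho 1 * dnw lam rho 2 ≤ 1 * (1 / (1 + Dd rho 1)) := by
            apply mul_le_mul h1 h2 h3 zero_le_one
        _ = 1 / (1 + Dd rho 1) := one_mul _
    · -- step: J = n+1 ≥ 2
      set J := n + 1 with hJ
      have h2J : 2 ≤ J := by omega
      have hTr : T lam rho J (J + 1) = upw lam rho J * T lam rho (J + 1) J +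
          dnw lam rho J * T lam rho (J - 1) J := by
        rw [Trec (by omega) J, if_pos h2J]
        simp only [Nat.add_sub_cancel]
      have hJ1 : J - 1 + 1 = J := by omega
      have hdown : T lam rho (J - 1) J = T lam rho (J - 1) ((J - 1) + 1) := by
        rw [hJ1]
      have hIH : T lam rho (J - 1) ((J - 1) + 1) ≤ sigmaWt rho (J - 1) := by
        have := ih hn
        have hn1 : J - 1 = n := by omega
        rw [hn1]
        exact this
      have hsig : sigmaWt rho J = (1 / (1 + Dd rho J)) * sigmaWt rho (J - 1) := by
        rw [sigmaWt, sigmaWt, ← hJ1, Finset.prod_Icc_succ_top (by omega), hJ1, mul_comm]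
      have hP : T lam rho (J + 1) J = ∏ n ∈ Finset.Icc 2 (J + 1), dnw lam rho n :=
        Tprod J (by omega)
      have hPle : T lam rho (J + 1) J ≤ sigmaWt rho J := by
        rw [hP]
        exact Tprod_le hlam hrho J (by omega)
      have hden := den_pos hlam hrho (j := J) (by omega)
      have hsden := sden_pos hrho J
      have hsignn := sigmaWt_nonneg hrho (J - 1)
      have hupnn := upw_nonneg hlam hrho (j := J) (by omega)
      have hkey : dnw lam rho J + upw lam rho J * (1 / (1 + Dd rho J)) =
          1 / (1 + Dd rho J) := by
        have h1 : (1 + lam J + Dd rho J) ≠ 0 := ne_of_gt hden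
        have h2 : (1 + Dd rho J) ≠ 0 := ne_of_gt hsden
        rw [dnw, upw, div_mul_div_comm, mul_one,
          div_add_div _ _ h1 (mul_ne_zero h1 h2), div_eq_div_iff (mul_ne_zero h1 (mul_ne_zero h1 h2)) h2]
        ring
      calc T lam rho J (J + 1) = upw lam rho J * T lam rho (J + 1) J +
              dnw lam rho J * T lam rho (J - 1) J := hTr
        _ ≤ upw lam rho J * ((1 / (1 + Dd rho J)) * sigmaWt rho (J - 1)) +
              dnw lam rho J * sigmaWt rho (J - 1) := by
            apply add_le_add
            · apply mul_le_mul_of_nonneg_left _ hupnn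
              rw [← hsig]
              exact hPle
            · apply mul_le_mul_of_nonneg_left _ (dnw_nonneg hlam hrho (by omega))
              rw [hdown]
              exact hIH
        _ = (dnw lam rho J + upw lam rho J * (1 / (1 + Dd rho J))) * sigmaWt rho (J - 1) := by
            ring
        _ = (1 / (1 + Dd rho J)) * sigmaWt rho (J - 1) := by rw [hkey]
        _ = sigmaWt rho J := hsig.symm


/-! ### The first-crossing decomposition -/

lemma main_decomp : ∀ (m j : ℕ), 1 ≤ j → j + 1 < m → (j + m) % 2 = 1 →
    T lam rho j m =
      ∑ l ∈ Finset.Icc 2 m, U lam rho j (m - l - 1) l * T lam rho l (l + 1) := by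
  intro m
  induction m using Nat.strong_induction_on with
  | _ m IH =>
    intro j hj hjm hpar
    obtain ⟨mm, rfl⟩ : ∃ mm, m = mm + 1 := ⟨m - 1, by omega⟩
    rw [Trec (by omega) j]
    simp only [Nat.add_sub_cancel]
    have hge : j + 2 ≤ mm := by omega
    rcases eq_or_lt_of_le hge with hB | hA
    · -- Case B : mm = j + 2, the up-step hits the diagonal
      subst hB
      have e1 : ∀ l ∈ Finset.Icc 2 (j + 2 + 1), l ∉ Finset.Icc 2 (j + 1) →
          U lam rho j (j + 2 + 1 - l - 1) l * T lam rho l (l + 1) = 0 := by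
        intro l hl hl2
        rw [Finset.mem_Icc] at hl hl2
        rw [Uzero_high (j + 2 + 1 - l - 1) j l (by omega), zero_mul]
      rw [← Finset.sum_subset (Finset.Icc_subset_Icc le_rfl (by omega)) e1]
      rw [Finset.sum_Icc_succ_top (by omega : 2 ≤ j + 1)]
      have hterm : U lam rho j (j + 2 + 1 - (j + 1) - 1) (j + 1) *
          T lam rho (j + 1) (j + 1 + 1) = upw lam rho j * T lam rho (j + 1) (j + 2) := by
        have h1 : j + 2 + 1 - (j + 1) - 1 = 1 := by omega
        have h2 : j + 1 + 1 = j + 2 := by omega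
        rw [h1, h2, U, if_pos rfl]
      rw [hterm, add_comm]
      congr 1
      by_cases h2 : 2 ≤ j
      · rw [if_pos h2]
        have hdn := IH (j + 2) (by omega) (j - 1) (by omega) (by omega) (by omega)
        rw [hdn]
        have e2 : ∀ l ∈ Finset.Icc 2 (j + 2), l ∉ Finset.Icc 2 j →
            U lam rho (j - 1) (j + 2 - l - 1) l * T lam rho l (l + 1) = 0 := by
          intro l hl hl2
          rw [Finset.mem_Icc] at hl hl2
          rw [Uzero_high (j + 2 - l - 1) (j - 1) l (by omega), zero_mul]
        rw [← Finset.sum_subset (Finset.Icc_subset_Icc le_rfl (by omega)) e2,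
          Finset.mul_sum]
        apply Finset.sum_congr rfl
        intro l hl
        rw [Finset.mem_Icc] at hl
        have ha : j + 2 + 1 - l - 1 = j + 2 - l := by omega
        rw [ha, Urec (by omega : 2 ≤ j + 2 - l) j l,
          Uzero_low (j + 2 - l - 1) (j + 1) l (by omega), if_pos h2, mul_zero, zero_add]
        ring
      · rw [if_neg h2, Finset.Icc_eq_empty (by omega), Finset.sum_empty]
    · -- Case A : j + 2 < mm, strictly below the diagonal
      have e1 : ∀ l ∈ Finset.Icc 2 (mm + 1), l ∉ Finset.Icc 2 (mm - 2) →
          U lam rho j (mm + 1 - l - 1) l * T lam rho l (l + 1) = 0 := by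
        intro l hl hl2
        rw [Finset.mem_Icc] at hl hl2
        rw [Uzero_high (mm + 1 - l - 1) j l (by omega), zero_mul]
      rw [← Finset.sum_subset (Finset.Icc_subset_Icc le_rfl (by omega)) e1]
      have hup := IH mm (by omega) (j + 1) (by omega) (by omega) (by omega)
      have eup : ∀ l ∈ Finset.Icc 2 mm, l ∉ Finset.Icc 2 (mm - 2) →
          U lam rho (j + 1) (mm - l - 1) l * T lam rho l (l + 1) = 0 := by
        intro l hl hl2
        rw [Finset.mem_Icc] at hl hl2
        rw [Uzero_high (mm - l - 1) (j + 1) l (by omega), zero_mul]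
      rw [hup, ← Finset.sum_subset (Finset.Icc_subset_Icc le_rfl (by omega)) eup]
      by_cases h2 : 2 ≤ j
      · rw [if_pos h2]
        have hdn := IH mm (by omega) (j - 1) (by omega) (by omega) (by omega)
        have edn : ∀ l ∈ Finset.Icc 2 mm, l ∉ Finset.Icc 2 (mm - 2) →
            U lam rho (j - 1) (mm - l - 1) l * T lam rho l (l + 1) = 0 := by
          intro l hl hl2
          rw [Finset.mem_Icc] at hl hl2
          rw [Uzero_high (mm - l - 1) (j - 1) l (by omega), zero_mul]
        rw [hdn, ← Finset.sum_subset (Finset.Icc_subset_Icc le_rfl (by omega)) edn,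
          Finset.mul_sum, Finset.mul_sum, ← Finset.sum_add_distrib]
        apply Finset.sum_congr rfl
        intro l hl
        rw [Finset.mem_Icc] at hl
        have ha : mm + 1 - l - 1 = mm - l := by omega
        rw [ha, Urec (by omega : 2 ≤ mm - l) j l, if_pos h2]
        ring
      · rw [if_neg h2, add_zero, Finset.mul_sum]
        apply Finset.sum_congr rfl
        intro l hl
        rw [Finset.mem_Icc] at hl
        have ha : mm + 1 - l - 1 = mm - l := by omega
        rw [ha, Urec (by omega : 2 ≤ mm - l) j l, if_neg h2, add_zero]
        ring

/-! ### Identifying `C_k` and `q` with `T` and `U` -/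

lemma Ck_eq_T (k : ℕ) : Ck lam rho k = T lam rho 1 (2 * k) := by
  rw [Ck, ← sumT (2 * k) 1]
  apply Finset.sum_congr rfl
  intro γ _
  set s := List.ofFn γ with hs
  have h1 := isDyck_eq_isJump s 0
  norm_num at h1
  have hd3 := dwt_eq_jwt (lam := lam) (rho := rho) s 0
  by_cases hd : isDyck 0 s = true
  · have h2 := endH_succ s 0 hd
    norm_num at h2
    have h3 := hd3 hd
    norm_num at h3
    by_cases he : endH 0 s = 0
    · rw [if_pos ⟨hd, he⟩, if_pos ⟨h1 ▸ hd, by rw [h2, he]⟩, h3]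
    · rw [if_neg (by tauto), if_neg (by rintro ⟨_, hh⟩; rw [h2] at hh; omega)]
  · rw [if_neg (by tauto), if_neg (by rintro ⟨hj', _⟩; rw [← h1] at hj'; exact hd hj')]

lemma qsum_eq_U (k l : ℕ) :
    qsum lam rho k l = U lam rho 1 (2 * k - l - 1) l * sigmaWt rho l := by
  rw [qsum, sumU]

end Aux

/-- **Renewal probabilities are dominated by reach probabilities (combinatorial form).**
For every `k ≥ 2`, `C_k ≤ Σ_{ℓ=2}^{k} q_ℓ^{(k)}`. -/
theorem catalan_le_reach (lam rho : ℕ → ℝ)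
    (hlam : ∀ i, 1 ≤ i → 0 ≤ lam i) (hrho : ∀ i, 1 ≤ i → 0 ≤ rho i)
    (k : ℕ) (hk : 2 ≤ k) :
    Ck lam rho k ≤ ∑ l ∈ Finset.Icc 2 k, qsum lam rho k l := by
  have hmain := main_decomp (lam := lam) (rho := rho) (2 * k) 1 le_rfl (by omega) (by omega)
  have hzero : ∀ l ∈ Finset.Icc 2 (2 * k), l ∉ Finset.Icc 2 k →
      U lam rho 1 (2 * k - l - 1) l * T lam rho l (l + 1) = 0 := by
    intro l hl hl2
    rw [Finset.mem_Icc] at hl hl2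
    rw [Uzero_high (2 * k - l - 1) 1 l (by omega), zero_mul]
  calc Ck lam rho k = T lam rho 1 (2 * k) := Ck_eq_T k
    _ = ∑ l ∈ Finset.Icc 2 (2 * k), U lam rho 1 (2 * k - l - 1) l * T lam rho l (l + 1) :=
        hmain
    _ = ∑ l ∈ Finset.Icc 2 k, U lam rho 1 (2 * k - l - 1) l * T lam rho l (l + 1) :=
        (Finset.sum_subset (Finset.Icc_subset_Icc le_rfl (by omega)) hzero).symm
    _ ≤ ∑ l ∈ Finset.Icc 2 k, U lam rho 1 (2 * k - l - 1) l * sigmaWt rho l := by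
        apply Finset.sum_le_sum
        intro l hl
        rw [Finset.mem_Icc] at hl
        apply mul_le_mul_of_nonneg_left
        · exact descent_le hlam hrho l (by omega)
        · exact Unonneg hlam hrho (2 * k - l - 1) 1 l le_rfl
    _ = ∑ l ∈ Finset.Icc 2 k, qsum lam rho k l := by
        apply Finset.sum_congr rfl
        intro l _
        rw [qsum_eq_U]
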